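/- arXiv:2009.04711 — 7 statements merged into one kernel-verified Lean document; each statement's English description precedes it below -/
import Mathlib

section
/- Let G be a transitive permutation group on a set X, and let Z1, Z2 be Jordan sets for (G,X) (i.e. for i=1,2, the pointwise stabiliser of X∖Zi acts transitively on Zi and |Zi|>1) forming a typical pair: Z1 ⊄ Z2, Z2 ⊄ Z1, and Z1 ∩ Z2 ≠ ∅. Then Z1 ∪ Z2 is a Jordan set for (G,X). -/
/-- `Z` is a Jordan set for the permutation group `G` on `X`: `|Z| > 1` and the
pointwise stabiliser of `X \ Z` acts transitively on `Z`. -/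
def IsJordanSet {X : Type*} (G : Subgroup (Equiv.Perm X)) (Z : Set X) : Prop :=
  Z.Nontrivial ∧ ∀ x ∈ Z, ∀ y ∈ Z, ∃ g ∈ G, (∀ a ∉ Z, g a = a) ∧ g x = y

theorem stmt0 {X : Type*} (G : Subgroup (Equiv.Perm X))
    (htrans : ∀ x y : X, ∃ g ∈ G, g x = y)
    (Z1 Z2 : Set X) (h1 : IsJordanSet G Z1) (h2 : IsJordanSet G Z2)
    (hn1 : ¬ Z1 ⊆ Z2) (hn2 : ¬ Z2 ⊆ Z1) (hint : (Z1 ∩ Z2).Nonempty) :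
    IsJordanSet G (Z1 ∪ Z2) := by
  obtain ⟨z, hz1, hz2⟩ := hint
  -- key: any point of the union can be moved to z
  have key : ∀ x ∈ Z1 ∪ Z2, ∃ g ∈ G, (∀ a ∉ Z1 ∪ Z2, g a = a) ∧ g x = z := by
    rintro x (hx | hx)
    · obtain ⟨g, hgG, hfix, hgx⟩ := h1.2 x hx z hz1
      exact ⟨g, hgG, fun a ha => hfix a (fun h => ha (Or.inl h)), hgx⟩
    · obtain ⟨g, hgG, hfix, hgx⟩ := h2.2 x hx z hz2
      exact ⟨g, hgG, fun a ha => hfix a (fun h => ha (Or.inr h)), hgx⟩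
  constructor
  · exact h1.1.mono Set.subset_union_left
  · intro x hx y hy
    obtain ⟨g, hgG, hgfix, hgx⟩ := key x hx
    obtain ⟨h, hhG, hhfix, hhy⟩ := key y hy
    refine ⟨h⁻¹ * g, mul_mem (inv_mem hhG) hgG, ?_, ?_⟩
    · intro a ha
      have : h a = a := hhfix a ha
      simp [Equiv.Perm.mul_apply, hgfix a ha,
        show h⁻¹ a = a from by conv_lhs => rw [← this, Equiv.Perm.inv_def, Equiv.symm_apply_apply]]
    · simp [Equiv.Perm.mul_apply, hgx, ← hhy, Equiv.symm_apply_apply]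
end

section
/- Let G be a transitive permutation group on a set X and let {Z_i : i ∈ I} be a connected family of Jordan sets for (G,X), meaning that for any i, i' ∈ I there exist j_0, ..., j_l ∈ I with j_0 = i, j_l = i', and Z_{j_{r-1}} ∩ Z_{j_r} ≠ ∅ for all 1 ≤ r ≤ l. Then ⋃_{i∈I} Z_i is a Jordan set for (G,X). -/
theorem stmt1 {X I : Type*} [Nonempty I] (G : Subgroup (Equiv.Perm X))
    (htrans : ∀ x y : X, ∃ g ∈ G, g x = y)
    (Z : I → Set X) (hJ : ∀ i, IsJordanSet G (Z i))
    (hconn : ∀ i i' : I, ∃ (l : ℕ) (j : Fin (l + 1) → I), j 0 = i ∧ j (Fin.last l) = i' ∧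
      ∀ r : Fin l, (Z (j r.castSucc) ∩ Z (j r.succ)).Nonempty) :
    IsJordanSet G (⋃ i, Z i) := by
  set U : Set X := ⋃ i, Z i with hU
  -- the "movable" relation
  set R : X → X → Prop := fun x y => ∃ g ∈ G, (∀ a ∉ U, g a = a) ∧ g x = y with hR
  have Rtrans : ∀ x y z, R x y → R y z → R x z := by
    rintro x y z ⟨g, hg, hfix, hxy⟩ ⟨g', hg', hfix', hyz⟩
    refine ⟨g' * g, mul_mem hg' hg, fun a ha => ?_, ?_⟩
    · simp [Equiv.Perm.mul_apply, hfix a ha, hfix' a ha]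
    · simp [Equiv.Perm.mul_apply, hxy, hyz]
  have Rsame : ∀ i, ∀ x ∈ Z i, ∀ y ∈ Z i, R x y := by
    intro i x hx y hy
    obtain ⟨g, hg, hfix, hxy⟩ := (hJ i).2 x hx y hy
    exact ⟨g, hg, fun a ha => hfix a (fun h => ha (Set.mem_iUnion.2 ⟨i, h⟩)), hxy⟩
  -- chain induction
  have key : ∀ l : ℕ, ∀ j : Fin (l + 1) → I,
      (∀ r : Fin l, (Z (j r.castSucc) ∩ Z (j r.succ)).Nonempty) →
      ∀ x ∈ Z (j 0), ∀ y ∈ Z (j (Fin.last l)), R x y := by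
    intro l
    induction l with
    | zero =>
      intro j _ x hx y hy
      exact Rsame (j 0) x hx y hy
    | succ l ih =>
      intro j hch x hx y hy
      obtain ⟨w, hw0, hw1⟩ := hch 0
      have h1 : R x w := Rsame (j 0) x hx w (by simpa using hw0)
      refine Rtrans x w y h1 ?_
      have := ih (fun r => j r.succ) (fun r => by
        show (Z (j r.castSucc.succ) ∩ Z (j r.succ.succ)).Nonempty
        rw [Fin.succ_castSucc]
        exact hch r.succ) w (by simpa using hw1) y (by
          show y ∈ Z (j (Fin.last l).succ)
          rw [Fin.succ_last]; exact hy)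
      exact this
  constructor
  · obtain ⟨i⟩ := ‹Nonempty I›
    obtain ⟨x, hx, y, hy, hxy⟩ := (hJ i).1
    exact ⟨x, Set.mem_iUnion.2 ⟨i, hx⟩, y, Set.mem_iUnion.2 ⟨i, hy⟩, hxy⟩
  · intro x hx y hy
    obtain ⟨i, hxi⟩ := Set.mem_iUnion.1 hx
    obtain ⟨i', hyi⟩ := Set.mem_iUnion.1 hy
    obtain ⟨l, j, hj0, hjl, hch⟩ := hconn i i'
    exact key l j hch x (hj0 ▸ hxi) y (hjl ▸ hyi)
end

section
/- Let T be a finite tree without vertices of degree 2, and let X be the set of leaves of T. Define D(x,y;z,w) to hold if (x = y ∧ x ∉ {z,w}) or (z = w ∧ z ∉ {x,y}) or (x,y,z,w are distinct and the path in T from x to y is vertex-disjoint from the path from z to w). Then D satisfies the D-relation axioms (D1)–(D4): (D1) D(x,y;z,w) implies D(y,x;z,w), D(x,y;w,z), and D(z,w;x,y); (D2) D(x,y;z,w) implies ¬D(x,z;y,w); (D3) D(x,y;z,w) implies for all a, D(a,y;z,w) ∨ D(x,y;z,a); (D4) if x ≠ z and y ≠ z then D(x,y;z,z). -/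
namespace TreeDHelper
open SimpleGraph Walk

variable {V : Type*} [DecidableEq V] {G : SimpleGraph V}

/-- Uniqueness of paths in a tree, as walks. -/
lemma uniq (hT : G.IsTree) {u v : V} {p q : G.Walk u v} (hp : p.IsPath) (hq : q.IsPath) :
    p = q := by
  obtain ⟨r, -, hr⟩ := hT.existsUnique_path u v
  rw [hr p hp, hr q hq]

/-- Any path between two vertices has support contained in any walk between them. -/
lemma subs (hT : G.IsTree) {c d : V} {p : G.Walk c d} (hp : p.IsPath) (W : G.Walk c d) :
    p.support ⊆ W.support := by
  have : p = W.bypass := uniq hT hp W.bypass_isPath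
  rw [this]; exact W.support_bypass_subset

lemma ord (hT : G.IsTree) {a b u w : V} {p : G.Walk a b} (hp : p.IsPath)
    (hu : u ∈ p.support) (hw : w ∈ p.support)
    (h : w ∈ (p.dropUntil u hu).support) : u ∈ (p.takeUntil w hw).support := by
  set d := p.dropUntil u hu with hd
  set q := (p.takeUntil u hu).append (d.takeUntil w h) with hqdef
  have hqsplit : q.append (d.dropUntil w h) = p := by
    rw [hqdef, ← Walk.append_assoc, Walk.take_spec, hd, Walk.take_spec]
  have hq : q.IsPath := by
    apply Walk.IsPath.of_append_left (q := d.dropUntil w h)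
    rwa [hqsplit]
  have heq : q = p.takeUntil w hw := uniq hT hq (hp.takeUntil hw)
  rw [← heq, hqdef, Walk.mem_support_append_iff]
  exact Or.inl (Walk.end_mem_support _)

lemma conv (hT : G.IsTree) {a b u w : V} {p : G.Walk a b} (hp : p.IsPath)
    (hu : u ∈ p.support) (hw : w ∈ p.support)
    (h : w ∈ (p.takeUntil u hu).support) : u ∈ (p.dropUntil w hw).support := by
  set t := p.takeUntil u hu with ht
  set W := (t.dropUntil w h).append (p.dropUntil u hu) with hWdef
  have hWsplit : (t.takeUntil w h).append W = p := by
    rw [hWdef, Walk.append_assoc, Walk.take_spec, ht, Walk.take_spec]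
  have hW : W.IsPath := by
    apply Walk.IsPath.of_append_right (p := t.takeUntil w h)
    rwa [hWsplit]
  have heq : W = p.dropUntil w hw := uniq hT hW (hp.dropUntil hw)
  rw [← heq, hWdef, Walk.mem_support_append_iff]
  exact Or.inl (Walk.end_mem_support _)

lemma tot (hT : G.IsTree) {a b u w : V} {p : G.Walk a b} (hp : p.IsPath)
    (hu : u ∈ p.support) (hw : w ∈ p.support) :
    w ∈ (p.dropUntil u hu).support ∨ u ∈ (p.dropUntil w hw).support := by
  have hw' := hw
  rw [← Walk.take_spec p hu, Walk.mem_support_append_iff] at hw'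
  rcases hw' with h | h
  · exact Or.inr (conv hT hp hu hw h)
  · exact Or.inl h

/-- A path starting on a path `Q`, once it has visited a vertex `n` outside `Q`,
never returns to `Q`. -/
lemma sep (hT : G.IsTree) {z wq aa n : V} {Q : G.Walk z wq} {r : G.Walk z aa}
    (hQ : Q.IsPath) (hr : r.IsPath) (hn : n ∈ r.support) (hnQ : n ∉ Q.support)
    {v : V} (hv : v ∈ (r.dropUntil n hn).support) (hvQ : v ∈ Q.support) : False := by
  have hvr : v ∈ r.support := Walk.support_dropUntil_subset _ _ hv
  have h1 : n ∈ (r.takeUntil v hvr).support := ord hT hr hn hvr hv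
  have h2 : (r.takeUntil v hvr).support ⊆ (Q.takeUntil v hvQ).support :=
    subs hT (hr.takeUntil _) (Q.takeUntil v hvQ)
  exact hnQ (Walk.support_takeUntil_subset _ _ (h2 h1))

lemma cross {c d : V} (A : V → Prop) (t : G.Walk c d) (hc : A c) (hd : ¬ A d) :
    ∃ u v, G.Adj u v ∧ A u ∧ ¬ A v ∧ u ∈ t.support ∧ v ∈ t.support := by
  induction t with
  | nil => exact absurd hc hd
  | @cons c e d h t ih =>
    by_cases hA : A e
    · obtain ⟨u, v, h1, h2, h3, h4, h5⟩ := ih hA hd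
      exact ⟨u, v, h1, h2, h3, by simp [Walk.support_cons, h4],
        by simp [Walk.support_cons, h5]⟩
    · exact ⟨c, e, h, hc, hA, Walk.start_mem_support _,
        by simp [Walk.support_cons, Walk.start_mem_support]⟩

/-- Crossing lemma: if the path `x→y` is disjoint from the path `z→w`, then any path
`x→z` meets any path `y→w`. -/
lemma crossL (hT : G.IsTree) {x y z w : V} {p : G.Walk x y} {q : G.Walk z w}
    (hp : p.IsPath) (hq : q.IsPath)
    (hpq : ∀ v, v ∈ p.support → v ∉ q.support)
    {r : G.Walk x z} {s : G.Walk y w} (hr : r.IsPath) (hs : s.IsPath) :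
    ∃ v, v ∈ r.support ∧ v ∈ s.support := by
  by_contra hcon
  push_neg at hcon
  set t := (p.reverse.append r).bypass with htdef
  have ht : t.IsPath := Walk.bypass_isPath _
  have ht1 : ∀ v ∈ t.support, v ∈ p.support ∨ v ∈ r.support := by
    intro v hv
    have := Walk.support_bypass_subset _ hv
    rw [Walk.mem_support_append_iff, Walk.support_reverse, List.mem_reverse] at this
    exact this
  have ht2 : ∀ v ∈ t.support, v ∈ s.support ∨ v ∈ q.support := by
    intro v hv
    have := subs hT ht (s.append q.reverse) hv
    rw [Walk.mem_support_append_iff, Walk.support_reverse, List.mem_reverse] at this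
    exact this
  set A : V → Prop := fun v => v ∈ p.support ∧ v ∈ s.support with hA
  have hAy : A y := ⟨Walk.end_mem_support _, Walk.start_mem_support _⟩
  have hAz : ¬ A z := by
    rintro ⟨h1, -⟩
    exact hpq z h1 (Walk.start_mem_support _)
  obtain ⟨u, v, huv, hAu, hAv, hut, hvt⟩ := cross A t hAy hAz
  have hB : v ∈ r.support ∧ v ∈ q.support := by
    rcases ht1 v hvt with h1 | h1 <;> rcases ht2 v hvt with h2 | h2
    · exact absurd ⟨h1, h2⟩ hAv
    · exact absurd h2 (hpq v h1)
    · exact absurd h2 (hcon v h1)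
    · exact ⟨h1, h2⟩
  have hup : u ∈ p.support := hAu.1
  have hus : u ∈ s.support := hAu.2
  have hunr : u ∉ r.support := fun h => hcon u h hus
  set Pu := p.takeUntil u hup with hPu
  set Rv := r.takeUntil v hB.1 with hRv
  set W := Pu.concat huv with hW
  have hWpath : W.IsPath := by
    rw [Walk.isPath_def, hW, Walk.support_concat]
    rw [List.nodup_append']
    refine ⟨(hp.takeUntil hup).support_nodup, List.nodup_singleton v, ?_⟩
    intro a ha hav
    rw [List.mem_singleton] at hav
    subst hav
    exact hpq a (Walk.support_takeUntil_subset _ _ ha) hB.2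
  have heq : W = Rv := uniq hT hWpath (hr.takeUntil hB.1)
  have huW : u ∈ W.support := by
    rw [hW, Walk.concat_eq_append, Walk.mem_support_append_iff]
    exact Or.inl (Walk.end_mem_support _)
  rw [heq] at huW
  exact hunr (Walk.support_takeUntil_subset _ _ huW)


/-- Main lemma for (D3): if `P : x→y` is disjoint from `Q : z→w`, then the path `z→a`
cannot meet `P` while the path `a→y` meets `Q`. -/
lemma lemM (hT : G.IsTree) {x y z w a n m : V} {P : G.Walk x y} {Q : G.Walk z w}
    (hP : P.IsPath) (hQ : Q.IsPath) (hPQ : ∀ v, v ∈ P.support → v ∉ Q.support)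
    {r : G.Walk z a} {s : G.Walk a y} (hr : r.IsPath) (hs : s.IsPath)
    (hnr : n ∈ r.support) (hnP : n ∈ P.support)
    (hms : m ∈ s.support) (hmQ : m ∈ Q.support) : False := by
  have hdisj : ∀ v, v ∈ (P.dropUntil n hnP).support → v ∉ (Q.takeUntil m hmQ).support := by
    intro v hv hv'
    exact hPQ v (Walk.support_dropUntil_subset _ _ hv) (Walk.support_takeUntil_subset _ _ hv')
  obtain ⟨v, hv1, hv2⟩ := crossL hT (hP.dropUntil hnP) (hQ.takeUntil hmQ) hdisj
    ((hr.takeUntil hnr).reverse) ((hs.dropUntil hms).reverse)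
  rw [Walk.support_reverse, List.mem_reverse] at hv1 hv2
  have hvr : v ∈ r.support := Walk.support_takeUntil_subset _ _ hv1
  have hvs : v ∈ s.support := Walk.support_dropUntil_subset _ _ hv2
  have hStepA : m ∈ (s.takeUntil v hvs).support := ord hT hs hms hvs hv2
  have hStepB : n ∈ (r.dropUntil v hvr).support := conv hT hr hnr hvr hv1
  have hE : r.dropUntil v hvr = (s.takeUntil v hvs).reverse :=
    uniq hT (hr.dropUntil hvr) ((hs.takeUntil hvs).reverse)
  have hmE : m ∈ (r.dropUntil v hvr).support := by
    rw [hE, Walk.support_reverse, List.mem_reverse]; exact hStepA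
  rcases tot hT (hr.dropUntil hvr) hStepB hmE with hcase | hcase
  · -- m after n in r : contradiction with sep
    have h1 : (r.dropUntil v hvr).dropUntil n hStepB = r.dropUntil n hnr :=
      uniq hT ((hr.dropUntil hvr).dropUntil hStepB) (hr.dropUntil hnr)
    rw [h1] at hcase
    exact sep hT hQ hr hnr (fun h => hPQ n hnP h) hcase hmQ
  · -- n after m in r
    have hmr : m ∈ r.support := Walk.support_dropUntil_subset _ _ hmE
    have h1 : (r.dropUntil v hvr).dropUntil m hmE = r.dropUntil m hmr :=
      uniq hT ((hr.dropUntil hvr).dropUntil hmE) (hr.dropUntil hmr)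
    rw [h1] at hcase
    -- n ∈ r.dropUntil m, and r.dropUntil m = (s.takeUntil m).reverse
    have h2 : r.dropUntil m hmr = (s.takeUntil m hms).reverse :=
      uniq hT (hr.dropUntil hmr) ((hs.takeUntil hms).reverse)
    rw [h2, Walk.support_reverse, List.mem_reverse] at hcase
    -- hcase : n ∈ (s.takeUntil m).support
    -- apply sep to s.reverse : y → a, with Q₀ := (P.dropUntil n).reverse : y → n
    have hms' : m ∈ s.reverse.support := by
      rw [Walk.support_reverse, List.mem_reverse]; exact hms
    have hmP : m ∉ (P.dropUntil n hnP).reverse.support := by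
      rw [Walk.support_reverse, List.mem_reverse]
      intro h
      exact hPQ m (Walk.support_dropUntil_subset _ _ h) hmQ
    have h3 : s.reverse.dropUntil m hms' = (s.takeUntil m hms).reverse :=
      uniq hT (hs.reverse.dropUntil hms') ((hs.takeUntil hms).reverse)
    have hn1 : n ∈ (s.reverse.dropUntil m hms').support := by
      rw [h3, Walk.support_reverse, List.mem_reverse]; exact hcase
    have hn2 : n ∈ (P.dropUntil n hnP).reverse.support := by
      rw [Walk.support_reverse, List.mem_reverse]
      exact Walk.start_mem_support _
    exact sep hT ((hP.dropUntil hnP).reverse) hs.reverse hms' hmP hn1 hn2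


lemma getPath (hT : G.IsTree) (u v : V) : ∃ p : G.Walk u v, p.IsPath :=
  ⟨(hT.existsUnique_path u v).exists.choose, (hT.existsUnique_path u v).exists.choose_spec⟩

end TreeDHelper

/-- The `D`-relation on vertices of a tree: `D x y z w` holds if `x = y` lies outside
`{z,w}`, or `z = w` lies outside `{x,y}`, or all four are distinct and the path from
`x` to `y` is vertex-disjoint from the path from `z` to `w`. -/
def TreeD {V : Type*} (G : SimpleGraph V) (x y z w : V) : Prop :=
  (x = y ∧ x ≠ z ∧ x ≠ w) ∨ (z = w ∧ z ≠ x ∧ z ≠ y) ∨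
  (x ≠ y ∧ x ≠ z ∧ x ≠ w ∧ y ≠ z ∧ y ≠ w ∧ z ≠ w ∧
    ∀ (p : G.Walk x y) (q : G.Walk z w), p.IsPath → q.IsPath →
      ∀ v, v ∈ p.support → v ∉ q.support)

theorem stmt5 {V : Type*} [Fintype V] [DecidableEq V] (G : SimpleGraph V)
    [DecidableRel G.Adj] (hT : G.IsTree) (hdeg : ∀ v, G.degree v ≠ 2)
    (X : Set V) (hX : X = {v | G.degree v = 1}) :
    (∀ x ∈ X, ∀ y ∈ X, ∀ z ∈ X, ∀ w ∈ X, TreeD G x y z w →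
      TreeD G y x z w ∧ TreeD G x y w z ∧ TreeD G z w x y) ∧
    (∀ x ∈ X, ∀ y ∈ X, ∀ z ∈ X, ∀ w ∈ X, TreeD G x y z w → ¬ TreeD G x z y w) ∧
    (∀ x ∈ X, ∀ y ∈ X, ∀ z ∈ X, ∀ w ∈ X, TreeD G x y z w →
      ∀ a ∈ X, TreeD G a y z w ∨ TreeD G x y z a) ∧
    (∀ x ∈ X, ∀ y ∈ X, ∀ z ∈ X, x ≠ z → y ≠ z → TreeD G x y z z) := by
  open TreeDHelper in
  refine ⟨?_, ?_, ?_, ?_⟩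
  · -- D1
    rintro x - y - z - w - hD
    rcases hD with ⟨h1, h2, h3⟩ | ⟨h1, h2, h3⟩ | ⟨h1, h2, h3, h4, h5, h6, h7⟩
    · subst h1
      exact ⟨Or.inl ⟨rfl, h2, h3⟩, Or.inl ⟨rfl, h3, h2⟩, Or.inr (Or.inl ⟨rfl, h2, h3⟩)⟩
    · subst h1
      exact ⟨Or.inr (Or.inl ⟨rfl, h3, h2⟩), Or.inr (Or.inl ⟨rfl, h2, h3⟩),
        Or.inl ⟨rfl, h2, h3⟩⟩
    · refine ⟨Or.inr (Or.inr ⟨Ne.symm h1, h4, h5, h2, h3, h6, ?_⟩),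
        Or.inr (Or.inr ⟨h1, h3, h2, h5, h4, Ne.symm h6, ?_⟩),
        Or.inr (Or.inr ⟨h6, Ne.symm h2, Ne.symm h4, Ne.symm h3, Ne.symm h5, h1, ?_⟩)⟩
      · intro p q hp hq v hv
        refine h7 p.reverse q hp.reverse hq v ?_
        rwa [SimpleGraph.Walk.support_reverse, List.mem_reverse]
      · intro p q hp hq v hv
        have := h7 p q.reverse hp hq.reverse v hv
        rwa [SimpleGraph.Walk.support_reverse, List.mem_reverse] at this
      · intro p q hp hq v hv hv'
        exact h7 q p hq hp v hv' hv
  · -- D2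
    rintro x - y - z - w - hD hD'
    rcases hD with ⟨h1, h2, h3⟩ | ⟨h1, h2, h3⟩ | ⟨h1, h2, h3, h4, h5, h6, h7⟩ <;>
      rcases hD' with ⟨g1, g2, g3⟩ | ⟨g1, g2, g3⟩ | ⟨g1, g2, g3, g4, g5, g6, g7⟩
    · exact h2 g1
    · exact g2 h1.symm
    · exact g2 h1
    · exact h2 g1.symm
    · exact h3 (h1.trans g1.symm)
    · exact g5 h1
    · exact h2 g1
    · exact h5 g1
    · obtain ⟨p, hp⟩ := getPath hT x y
      obtain ⟨q, hq⟩ := getPath hT z w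
      obtain ⟨r, hr⟩ := getPath hT x z
      obtain ⟨s, hs⟩ := getPath hT y w
      obtain ⟨v, hv1, hv2⟩ := crossL hT hp hq (h7 p q hp hq) hr hs
      exact g7 r s hr hs v hv1 hv2
  · -- D3
    rintro x - y - z - w - hD a -
    rcases hD with ⟨h1, h2, h3⟩ | ⟨h1, h2, h3⟩ | ⟨h1, h2, h3, h4, h5, h6, h7⟩
    · subst h1
      by_cases hax : a = x
      · subst hax
        exact Or.inl (Or.inl ⟨rfl, h2, h3⟩)
      · exact Or.inr (Or.inl ⟨rfl, h2, fun h => hax h.symm⟩)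
    · subst h1
      by_cases haz : z = a
      · exact Or.inr (Or.inr (Or.inl ⟨haz, h2, h3⟩))
      · exact Or.inl (Or.inr (Or.inl ⟨rfl, haz, h3⟩))
    · by_cases hax : a = x
      · subst hax
        exact Or.inl (Or.inr (Or.inr ⟨h1, h2, h3, h4, h5, h6, h7⟩))
      · by_cases hay : a = y
        · exact Or.inl (Or.inl ⟨hay, by rw [hay]; exact h4, by rw [hay]; exact h5⟩)
        · by_cases haz : a = z
          · exact Or.inr (Or.inr (Or.inl ⟨haz.symm, Ne.symm h2, Ne.symm h4⟩))
          · by_cases haw : a = w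
            · subst haw
              exact Or.inr (Or.inr (Or.inr ⟨h1, h2, h3, h4, h5, h6, h7⟩))
            · have key : (∀ (p : G.Walk a y) (q : G.Walk z w), p.IsPath → q.IsPath →
                  ∀ v, v ∈ p.support → v ∉ q.support) ∨
                (∀ (p : G.Walk x y) (q : G.Walk z a), p.IsPath → q.IsPath →
                  ∀ v, v ∈ p.support → v ∉ q.support) := by
                by_contra hcon
                push_neg at hcon
                obtain ⟨⟨s₀, Q₀, hs₀, hQ₀, m, hm1, hm2⟩, ⟨P₀, r₀, hP₀, hr₀, n, hn1, hn2⟩⟩ := hcon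
                exact lemM hT hP₀ hQ₀ (h7 P₀ Q₀ hP₀ hQ₀) hr₀ hs₀
                  hn2 hn1 hm1 hm2
              rcases key with hk | hk
              · exact Or.inl (Or.inr (Or.inr ⟨hay, haz, haw, h4, h5, h6, hk⟩))
              · exact Or.inr (Or.inr (Or.inr ⟨h1, h2, Ne.symm hax, h4, Ne.symm hay,
                  Ne.symm haz, hk⟩))
  · -- D4
    rintro x - y - z - hxz hyz
    exact Or.inr (Or.inl ⟨rfl, Ne.symm hxz, Ne.symm hyz⟩)
end

section
/- Let (X,C) be a C-relation (a ternary relation satisfying the C-relation axioms). Define D(x,y;z,w) ⟺ (C(x;z,w) ∧ C(y;z,w)) ∨ (C(z;x,y) ∧ C(w;x,y)). Then D satisfies axioms (D1) and (D2) of a D-relation: D(x,y;z,w) implies D(y,x;z,w) ∧ D(x,y;w,z) ∧ D(z,w;x,y), and D(x,y;z,w) implies ¬D(x,z;y,w). -/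
theorem stmt6 {X : Type*} (C : X → X → X → Prop)
    (hC1 : ∀ x y z, C x y z → C x z y)
    (hC2 : ∀ x y z, C x y z → ¬ C y x z)
    (hC3 : ∀ x y z, C x y z → ∀ w, C x w z ∨ C w y z)
    (hC4 : ∀ x y : X, x ≠ y → C x y y) :
    (∀ x y z w : X, ((C x z w ∧ C y z w) ∨ (C z x y ∧ C w x y)) →
      (((C y z w ∧ C x z w) ∨ (C z y x ∧ C w y x)) ∧
       ((C x w z ∧ C y w z) ∨ (C w x y ∧ C z x y)) ∧
       ((C z x y ∧ C w x y) ∨ (C x z w ∧ C y z w)))) ∧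
    (∀ x y z w : X, ((C x z w ∧ C y z w) ∨ (C z x y ∧ C w x y)) →
      ¬ ((C x y w ∧ C z y w) ∨ (C y x z ∧ C w x z))) := by
  constructor
  · rintro x y z w (⟨h1, h2⟩ | ⟨h1, h2⟩)
    · exact ⟨Or.inl ⟨h2, h1⟩, Or.inl ⟨hC1 _ _ _ h1, hC1 _ _ _ h2⟩, Or.inr ⟨h1, h2⟩⟩
    · exact ⟨Or.inr ⟨hC1 _ _ _ h1, hC1 _ _ _ h2⟩, Or.inr ⟨h2, h1⟩, Or.inl ⟨h1, h2⟩⟩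
  · rintro x y z w (⟨h1, h2⟩ | ⟨h1, h2⟩) (⟨g1, g2⟩ | ⟨g1, g2⟩)
    · exact hC2 _ _ _ g2 h2
    · exact hC2 _ _ _ (hC1 _ _ _ h1) g2
    · exact hC2 _ _ _ (hC1 _ _ _ g1) h2
    · exact hC2 _ _ _ (hC1 _ _ _ g1) (hC1 _ _ _ h1)
end

section
/- Let G be a permutation group on a set X containing an element g that fixes three distinct points x, y, z and swaps two further distinct points u, v (all five points distinct). Then G does not preserve any separation relation on X, where a separation relation is the 4-ary relation induced by a circular order indicating that pairs separate each other; in particular, no circular order on X invariant under G can exist with this cycle structure. -/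
/-- The separation relation induced by a circular order: `SepRel c a b d e` holds iff
`d` and `e` lie in distinct arcs determined by `a` and `b`. -/
def SepRel {X : Type*} (c : CircularOrder X) (a b d e : X) : Prop :=
  letI := c
  (sbtw a d b ∧ sbtw b e a) ∨ (sbtw a e b ∧ sbtw b d a)

section Helpers

variable {X : Type*} [inst : CircularOrder X]

private lemma my_asymm {a p q : X} (h : sbtw a p q) : ¬ sbtw a q p :=
  fun h' => sbtw_asymm h (sbtw_cyclic_left h')

private lemma my_total {a p q : X} (hap : a ≠ p) (haq : a ≠ q) (hpq : p ≠ q) :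
    sbtw a p q ∨ sbtw a q p := by
  by_contra h
  push_neg at h
  have H1 : btw q p a := not_not.mp (fun hn => h.1 (sbtw_iff_not_btw.mpr hn))
  have H2 : btw p q a := not_not.mp (fun hn => h.2 (sbtw_iff_not_btw.mpr hn))
  rcases (btw_cyclic_right H2).antisymm H1 with h' | h' | h'
  · exact hap h'
  · exact hpq h'
  · exact haq h'.symm

private lemma cut_mid {a p q r : X} (h1 : sbtw a p q) (h2 : sbtw a q r) : sbtw p q r := by
  have h2' : sbtw q r a := sbtw_cyclic_left h2
  have h1' : sbtw q a p := sbtw_cyclic_left (sbtw_cyclic_left h1)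
  exact sbtw_cyclic_left (sbtw_cyclic_left (sbtw_trans_right h2' h1'))

private lemma sep_iff (a b d e : X) :
    SepRel inst a b d e ↔ (sbtw a d b ∧ sbtw a b e) ∨ (sbtw a e b ∧ sbtw a b d) := by
  unfold SepRel
  rw [show sbtw b e a ↔ sbtw a b e from sbtw_cyclic,
      show sbtw b d a ↔ sbtw a b d from sbtw_cyclic]

/-- If the two "crossing" separation relations are equivalent, then the third
partition separates. -/
private lemma lemA {a b d e : X} (hab : a ≠ b) (had : a ≠ d) (hae : a ≠ e)
    (hbd : b ≠ d) (hbe : b ≠ e) (hde : d ≠ e)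
    (h : SepRel inst a d b e ↔ SepRel inst a e b d) : SepRel inst a b d e := by
  rw [sep_iff] at h ⊢
  rw [sep_iff] at h
  -- h : (sbtw a b d ∧ sbtw a d e) ∨ (sbtw a e d ∧ sbtw a d b)
  --   ↔ (sbtw a b e ∧ sbtw a e d) ∨ (sbtw a d e ∧ sbtw a e b)
  rcases my_total hab had hbd with h1 | h1 <;>
    rcases my_total hab hae hbe with h2 | h2 <;>
      rcases my_total had hae hde with h3 | h3
  · rcases h.mp (Or.inl ⟨h1, h3⟩) with ⟨_, h'⟩ | ⟨_, h'⟩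
    · exact absurd h' (my_asymm h3)
    · exact absurd h' (my_asymm h2)
  · rcases h.mpr (Or.inl ⟨h2, h3⟩) with ⟨_, h'⟩ | ⟨_, h'⟩
    · exact absurd h' (my_asymm h3)
    · exact absurd h1 (my_asymm h')
  · exact absurd (sbtw_trans_right h1 h3) (my_asymm h2)
  · exact Or.inr ⟨h2, h1⟩
  · exact Or.inl ⟨h1, h2⟩
  · exact absurd (sbtw_trans_right h1 h2) (my_asymm h3)
  · rcases h.mpr (Or.inr ⟨h3, h2⟩) with ⟨h', _⟩ | ⟨h', _⟩
    · exact absurd h' (my_asymm h1)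
    · exact absurd h3 (my_asymm h')
  · rcases h.mp (Or.inr ⟨h3, h1⟩) with ⟨h', _⟩ | ⟨h', _⟩
    · exact absurd h' (my_asymm h2)
    · exact absurd h' (my_asymm h3)

/-- The separation relation is symmetric under exchanging the two pairs. -/
private lemma lemSymm {a b d e : X} (h : SepRel inst a b d e) : SepRel inst d e a b := by
  rw [sep_iff] at h ⊢
  rcases h with ⟨h1, h2⟩ | ⟨h1, h2⟩
  · -- h1 : sbtw a d b, h2 : sbtw a b e
    refine Or.inr ⟨cut_mid h1 h2, ?_⟩
    exact sbtw_cyclic_left (sbtw_trans_right h1 h2)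
  · -- h1 : sbtw a e b, h2 : sbtw a b d
    refine Or.inl ⟨?_, ?_⟩
    · exact sbtw_cyclic_left (sbtw_cyclic_left (sbtw_trans_right h1 h2))
    · exact sbtw_cyclic_left (sbtw_cyclic_left (cut_mid h1 h2))

private lemma lemB {x y z u v : X}
    (h1 : SepRel inst u v x y) (h2 : SepRel inst u v x z) (h3 : SepRel inst u v y z) :
    False := by
  rw [sep_iff] at h1 h2 h3
  have nx : ¬ (sbtw u x v ∧ sbtw u v x) := fun ⟨h, h'⟩ => my_asymm h h'
  have ny : ¬ (sbtw u y v ∧ sbtw u v y) := fun ⟨h, h'⟩ => my_asymm h h'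
  have nz : ¬ (sbtw u z v ∧ sbtw u v z) := fun ⟨h, h'⟩ => my_asymm h h'
  tauto

end Helpers

theorem stmt9 {X : Type*} (G : Subgroup (Equiv.Perm X)) (g : Equiv.Perm X) (hg : g ∈ G)
    (x y z u v : X) (hdist : List.Pairwise (· ≠ ·) [x, y, z, u, v])
    (hx : g x = x) (hy : g y = y) (hz : g z = z) (hu : g u = v) (hv : g v = u) :
    ¬ ∃ c : CircularOrder X, ∀ h ∈ G, ∀ a b d e : X,
      SepRel c a b d e ↔ SepRel c (h a) (h b) (h d) (h e) := by
  rintro ⟨c, hc⟩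
  letI := c
  rw [List.pairwise_cons] at hdist
  obtain ⟨hxd, hdist⟩ := hdist
  rw [List.pairwise_cons] at hdist
  obtain ⟨hyd, hdist⟩ := hdist
  rw [List.pairwise_cons] at hdist
  obtain ⟨hzd, hdist⟩ := hdist
  rw [List.pairwise_cons] at hdist
  obtain ⟨hud, -⟩ := hdist
  have hxy : x ≠ y := hxd y (by simp)
  have hxz : x ≠ z := hxd z (by simp)
  have hxu : x ≠ u := hxd u (by simp)
  have hxv : x ≠ v := hxd v (by simp)
  have hyz : y ≠ z := hyd z (by simp)
  have hyu : y ≠ u := hyd u (by simp)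
  have hyv : y ≠ v := hyd v (by simp)
  have hzu : z ≠ u := hzd u (by simp)
  have hzv : z ≠ v := hzd v (by simp)
  have huv : u ≠ v := hud v (by simp)
  have e1 := hc g hg x u y v
  rw [hx, hu, hy, hv] at e1
  have e2 := hc g hg x u z v
  rw [hx, hu, hz, hv] at e2
  have e3 := hc g hg y u z v
  rw [hy, hu, hz, hv] at e3
  have k1 : SepRel c x y u v := lemA hxy hxu hxv hyu hyv huv e1
  have k2 : SepRel c x z u v := lemA hxz hxu hxv hzu hzv huv e2
  have k3 : SepRel c y z u v := lemA hyz hyu hyv hzu hzv huv e3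
  exact lemB (lemSymm k1) (lemSymm k2) (lemSymm k3)
end

section
/- Let G be a transitive permutation group on a set Y, let E be a G-invariant equivalence relation on Y such that the induced action of G on Y/E is 2-transitive, and suppose that for any two E-equivalent x, x' ∈ Y and any y in a different E-class there exists g ∈ G with x^g = x' and y^g = y. If E* is any G-congruence on Y not contained in E, then E* is the universal relation. Consequently E is the unique maximal proper G-congruence on Y (provided E is proper and non-trivial). -/
theorem stmt14 {Y : Type*} (G : Subgroup (Equiv.Perm Y))
    (htrans : ∀ x y : Y, ∃ g ∈ G, g x = y)
    (E : Y → Y → Prop) (hE : Equivalence E)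
    (hEinv : ∀ g ∈ G, ∀ x y, E x y → E (g x) (g y))
    -- E is proper and non-trivial
    (hproper : ∃ x y, ¬ E x y) (hnontriv : ∃ x y, x ≠ y ∧ E x y)
    -- the induced action on Y/E is 2-transitive
    (h2 : ∀ x y x' y' : Y, ¬ E x y → ¬ E x' y' → ∃ g ∈ G, E (g x) x' ∧ E (g y) y')
    -- for E-equivalent x, x' and y in a different class, some g moves x to x' fixing y
    (hhom : ∀ x x' y : Y, E x x' → ¬ E x y → ∃ g ∈ G, g x = x' ∧ g y = y) :
    -- any G-congruence not contained in E is universal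
    (∀ E' : Y → Y → Prop, Equivalence E' → (∀ g ∈ G, ∀ x y, E' x y → E' (g x) (g y)) →
      ¬ (∀ x y, E' x y → E x y) → ∀ x y, E' x y) ∧
    -- hence E is the unique maximal proper G-congruence: every proper one lies in E
    (∀ E' : Y → Y → Prop, Equivalence E' → (∀ g ∈ G, ∀ x y, E' x y → E' (g x) (g y)) →
      ¬ (∀ x y, E' x y) → ∀ x y, E' x y → E x y) := by
  have main : ∀ E' : Y → Y → Prop, Equivalence E' →
      (∀ g ∈ G, ∀ x y, E' x y → E' (g x) (g y)) →
      ¬ (∀ x y, E' x y → E x y) → ∀ x y, E' x y := by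
    intro E' hE' hE'inv hnc
    push_neg at hnc
    obtain ⟨a, b, hab', hab⟩ := hnc
    -- Claim: any pair in different E-classes is E'-related
    have claim : ∀ x y, ¬ E x y → E' x y := by
      intro x y hxy
      obtain ⟨g, hg, hga, hgb⟩ := h2 a b x y hab hxy
      -- a' = g a, b' = g b
      have hab2 : E' (g a) (g b) := hE'inv g hg a b hab'
      have hnab2 : ¬ E (g a) (g b) := by
        intro h
        apply hab
        have := hEinv g⁻¹ (inv_mem hg) _ _ h
        simpa using this
      -- h: g a ↦ x, fixes g b
      obtain ⟨h, hh, hh1, hh2⟩ := hhom (g a) x (g b) hga hnab2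
      have hx_b : E' x (g b) := by
        have := hE'inv h hh _ _ hab2
        rwa [hh1, hh2] at this
      have hnx_b : ¬ E x (g b) := fun hc => hnab2 (hE.trans hga hc)
      have hnb_x : ¬ E (g b) x := fun hc => hnx_b (hE.symm hc)
      -- h': g b ↦ y, fixes x
      obtain ⟨k, hk, hk1, hk2⟩ := hhom (g b) y x hgb hnb_x
      have := hE'inv k hk _ _ hx_b
      rwa [hk2, hk1] at this
    intro x y
    by_cases hxy : E x y
    · obtain ⟨u, v, huv⟩ := hproper
      obtain ⟨g, hg, hgu⟩ := htrans u x
      have hz : ¬ E x (g v) := by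
        intro h
        apply huv
        have h2' : E (g u) (g v) := hgu ▸ h
        have := hEinv g⁻¹ (inv_mem hg) _ _ h2'
        simpa using this
      have hyz : ¬ E y (g v) := fun h => hz (hE.trans hxy h)
      exact hE'.trans (claim x (g v) hz) (hE'.symm (claim y (g v) hyz))
    · exact claim x y hxy
  refine ⟨main, ?_⟩
  intro E' hE' hE'inv hnun x y hxy
  by_contra h
  exact hnun (main E' hE' hE'inv (fun hc => h (hc x y hxy)))
end

section
/- Let G be a transitive permutation group on X and suppose 𝒦 is a G-invariant family of subsets of X, each of size > 1, with no typical pair, such that any two distinct points of X lie together in some member of 𝒦, and for any distinct u, v ∈ X some member of 𝒦 contains u but not v. Define C(x;y,z) ⟺ ∃U ∈ 𝒦 (y, z ∈ U ∧ x ∉ U). Then C is a G-invariant ternary relation satisfying: C(x;y,z) → C(x;z,y), and C(x;y,z) → ¬C(y;x,z) provided additionally that for U, V ∈ 𝒦 with U ∩ V ≠ ∅ one has U ⊆ V or V ⊆ U. -/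
theorem stmt18 {X : Type*} (G : Subgroup (Equiv.Perm X))
    (htrans : ∀ x y : X, ∃ g ∈ G, g x = y)
    (K : Set (Set X))
    (hKinv : ∀ g ∈ G, ∀ U ∈ K, (⇑g '' U) ∈ K)
    (hKnt : ∀ U ∈ K, U.Nontrivial)
    -- no typical pair: intersecting members are comparable under inclusion
    (hKchain : ∀ U ∈ K, ∀ V ∈ K, (U ∩ V).Nonempty → U ⊆ V ∨ V ⊆ U)
    (hKpair : ∀ u v : X, u ≠ v → ∃ U ∈ K, u ∈ U ∧ v ∈ U)
    (hKsep : ∀ u v : X, u ≠ v → ∃ U ∈ K, u ∈ U ∧ v ∉ U) :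
    -- C(x;y,z) := ∃ U ∈ K, y, z ∈ U ∧ x ∉ U is G-invariant, and satisfies C1 and C2
    (∀ g ∈ G, ∀ x y z : X, (∃ U ∈ K, y ∈ U ∧ z ∈ U ∧ x ∉ U) ↔
        (∃ U ∈ K, g y ∈ U ∧ g z ∈ U ∧ g x ∉ U)) ∧
    (∀ x y z : X, (∃ U ∈ K, y ∈ U ∧ z ∈ U ∧ x ∉ U) →
        (∃ U ∈ K, z ∈ U ∧ y ∈ U ∧ x ∉ U)) ∧
    (∀ x y z : X, (∃ U ∈ K, y ∈ U ∧ z ∈ U ∧ x ∉ U) →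
        ¬ (∃ U ∈ K, x ∈ U ∧ z ∈ U ∧ y ∉ U)) := by
  refine ⟨?_, ?_, ?_⟩
  · intro g hg x y z
    constructor
    · rintro ⟨U, hU, hy, hz, hx⟩
      exact ⟨g '' U, hKinv g hg U hU, ⟨y, hy, rfl⟩, ⟨z, hz, rfl⟩,
        fun ⟨w, hw, hwx⟩ => hx (g.injective hwx ▸ hw)⟩
    · rintro ⟨U, hU, hy, hz, hx⟩
      refine ⟨⇑g⁻¹ '' U, hKinv g⁻¹ (inv_mem hg) U hU, ⟨g y, hy, by simp⟩,
        ⟨g z, hz, by simp⟩, ?_⟩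
      rintro ⟨w, hw, hwx⟩
      apply hx
      have : w = g x := by
        have := congrArg g hwx; simpa using this
      rwa [← this]
  · rintro x y z ⟨U, hU, hy, hz, hx⟩
    exact ⟨U, hU, hz, hy, hx⟩
  · rintro x y z ⟨U, hU, hy, hz, hx⟩ ⟨V, hV, hx', hz', hy'⟩
    rcases hKchain U hU V hV ⟨z, hz, hz'⟩ with h | h
    · exact hy' (h hy)
    · exact hx (h hx')
end
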